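/- Let X be a 1-geodesic metric space, W ⊆ X, r ≥ 1 and A ≥ 0. Then a subset C ⊆ X is an (r,A)-coarse complementary component of W if and only if C \ N_A(W) is a union of vertex sets of connected components of the graph whose vertex set is X \ N_A(W) and in which distinct vertices x, y are adjacent iff d(x,y) ≤ r. -/

import Mathlib

open Metric Set
open scoped NNReal

/-- The closed `r`-neighbourhood `N_r(A)` of a subset `A` of a metric space. -/
def nbhd {X : Type*} [PseudoMetricSpace X] (r : ℝ≥0) (A : Set X) : Set X :=
  {x : X | ∃ a ∈ A, nndist x a ≤ r}

/-- The coarse `r`-boundary `∂_r C := {x ∈ X \ C : d(x,C) ≤ r}`. -/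
def coarseBoundary {X : Type*} [PseudoMetricSpace X] (r : ℝ≥0) (C : Set X) : Set X :=
  {x : X | x ∉ C ∧ ∃ c ∈ C, nndist x c ≤ r}

/-- `C` is an `(r,A)`-coarse complementary component of `W`:
`∂_r (C \ N_A(W)) ⊆ N_A(W)`. -/
def IsCCC {X : Type*} [PseudoMetricSpace X] (r A : ℝ≥0) (W C : Set X) : Prop :=
  coarseBoundary r (C \ nbhd A W) ⊆ nbhd A W

/-- `C` is a coarse complementary component of `W`, i.e. an `(r,A)`-coarse complementary
component for some `r ≥ 1`, `A ≥ 0`. -/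
def IsCoarseCompComplement {X : Type*} [PseudoMetricSpace X] (W C : Set X) : Prop :=
  ∃ r A : ℝ≥0, 1 ≤ r ∧ IsCCC r A W C

/-- A coarse complementary component is shallow if contained in some neighbourhood of `W`. -/
def IsShallow {X : Type*} [PseudoMetricSpace X] (W C : Set X) : Prop :=
  ∃ R : ℝ≥0, C ⊆ nbhd R W

/-- A metric space is 1-geodesic if any two points are joined by a discrete geodesic. -/
def OneGeodesic (X : Type*) [PseudoMetricSpace X] : Prop :=
  ∀ x y : X, ∃ (n : ℕ) (c : ℕ → X), c 0 = x ∧ c n = y ∧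
    ∀ i ≤ n, ∀ j ≤ n, dist (c i) (c j) = |(i : ℝ) - (j : ℝ)|

/-- `W` coarsely `n`-separates `X`: there are `n` deep, pairwise coarse disjoint,
coarse complementary components of `W`. -/
def CoarselySeparates {X : Type*} [PseudoMetricSpace X] (n : ℕ) (W : Set X) : Prop :=
  ∃ C : Fin n → Set X,
    (∀ i, IsCoarseCompComplement W (C i)) ∧
    (∀ i, ¬ IsShallow W (C i)) ∧
    ∀ i j : Fin n, i ≠ j → IsShallow W (C i ∩ C j)

/-- The graph whose vertex set is `X \ N_A(W)` and in which distinct vertices `x, y`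
are adjacent iff `d(x,y) ≤ r`. -/
def complementGraph {X : Type*} [PseudoMetricSpace X] (r A : ℝ≥0) (W : Set X) :
    SimpleGraph {x : X // x ∉ nbhd A W} where
  Adj u v := u ≠ v ∧ nndist (u : X) (v : X) ≤ r
  symm := by
    constructor
    intro u v h
    exact ⟨h.1.symm, by rw [nndist_comm]; exact h.2⟩
  loopless := by
    constructor
    intro u h
    exact h.1 rfl

/-- `C ⊆ X` is an `(r,A)`-coarse complementary component of `W` iff
`C \ N_A(W)` is a union of vertex sets of connected components of the graph on
`X \ N_A(W)` where distinct points are adjacent iff they are at distance at most `r`,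
i.e. membership of `C` among such vertices is invariant under reachability. -/
theorem isCCC_iff_union_of_components {X : Type*} [MetricSpace X] (hX : OneGeodesic X)
    (W : Set X) (r A : ℝ≥0) (hr : 1 ≤ r) (C : Set X) :
    IsCCC r A W C ↔
      ∀ u v : {x : X // x ∉ nbhd A W}, (complementGraph r A W).Reachable u v →
        ((u : X) ∈ C ↔ (v : X) ∈ C) := by
  constructor
  · intro hC u v huv
    -- one-step lemma
    have step : ∀ a b : {x : X // x ∉ nbhd A W}, (complementGraph r A W).Adj a b →
        (a : X) ∈ C → (b : X) ∈ C := by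
      intro a b hab ha
      by_contra hb
      have hbd : (b : X) ∈ coarseBoundary r (C \ nbhd A W) := by
        refine ⟨fun h => hb h.1, (a : X), ⟨ha, a.2⟩, ?_⟩
        rw [nndist_comm]; exact hab.2
      exact b.2 (hC hbd)
    obtain ⟨w⟩ := huv
    induction w with
    | nil => rfl
    | cons h p ih =>
      exact Iff.trans ⟨step _ _ h, step _ _ h.symm⟩ ih
  · intro h x hx
    obtain ⟨hxC, c, hc, hdc⟩ := hx
    by_contra hxW
    have hcW : c ∉ nbhd A W := hc.2
    by_cases hxc : x = c
    · exact hxC (hxc ▸ hc)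
    · have hadj : (complementGraph r A W).Adj ⟨x, hxW⟩ ⟨c, hcW⟩ :=
        ⟨fun heq => hxc (congrArg Subtype.val heq), hdc⟩
      have := h ⟨x, hxW⟩ ⟨c, hcW⟩ hadj.reachable
      exact hxC ⟨this.mpr hc.1, hxW⟩
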